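/- For every n ≥ 2 and every subset A of L: (1) (X, τ(A)) is perfect if and only if the subspace L of (X, τ(A)) is perfect; (2) (X, τ(A)) is Lindelöf if and only if the subspace L of (X, τ(A)) is Lindelöf; (3) (X, τ(A)) is σ-compact if and only if the subspace L of (X, τ(A)) is σ-compact. -/

import Mathlib

open Metric Set TopologicalSpace

noncomputable section

/-- The last coordinate `x (n-1)` of a point of `EuclideanSpace ℝ (Fin n)`
(junk value `0` if `n = 0`). -/
def lastCoord (n : ℕ) (x : EuclideanSpace ℝ (Fin n)) : ℝ :=
  if h : 0 < n then x ⟨n - 1, Nat.sub_lt h one_pos⟩ else 0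

/-- The closed upper half-space `X = {x : x (n-1) ≥ 0}`. -/
def HalfSpace (n : ℕ) : Set (EuclideanSpace ℝ (Fin n)) := {x | 0 ≤ lastCoord n x}

/-- The open upper half-space `P = {x : x (n-1) > 0}`. -/
def OpenHalf (n : ℕ) : Set (EuclideanSpace ℝ (Fin n)) := {x | 0 < lastCoord n x}

/-- The boundary hyperplane `L = {x : x (n-1) = 0}`. -/
def Bdry (n : ℕ) : Set (EuclideanSpace ℝ (Fin n)) := {x | lastCoord n x = 0}

/-- The `n`-th standard basis vector `e` (junk value `0` if `n = 0`). -/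
def eVec (n : ℕ) : EuclideanSpace ℝ (Fin n) :=
  if h : 0 < n then EuclideanSpace.single ⟨n - 1, Nat.sub_lt h one_pos⟩ (1 : ℝ) else 0

/-- The tangent ball `B̃(a, ε) = {a} ∪ B(a + ε • e, ε)`. -/
def tangentBall (n : ℕ) (a : EuclideanSpace ℝ (Fin n)) (ε : ℝ) :
    Set (EuclideanSpace ℝ (Fin n)) :=
  {a} ∪ ball (a + ε • eVec n) ε

/-- The generating family for the topology `τ(A)` on `X`:
balls `B(a,ε)` with `a ∈ P`, `0 < ε < a (n-1)`; traces `B(a,ε) ∩ X` with `a ∈ A`, `ε > 0`;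
and tangent balls `B̃(a,ε)` with `a ∈ L \ A`, `ε > 0`. -/
def niemGen (n : ℕ) (A : Set (EuclideanSpace ℝ (Fin n))) : Set (Set (HalfSpace n)) :=
  {s | ∃ a ∈ OpenHalf n, ∃ ε, 0 < ε ∧ ε < lastCoord n a ∧
      s = Subtype.val ⁻¹' ball a ε} ∪
  {s | ∃ a ∈ A, ∃ ε, 0 < ε ∧ s = Subtype.val ⁻¹' ball a ε} ∪
  {s | ∃ a ∈ Bdry n \ A, ∃ ε, 0 < ε ∧ s = Subtype.val ⁻¹' tangentBall n a ε}

/-- The topology `τ(A)` on `X`; `τ(∅)` is the Niemytzki topology `τ_N`. -/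
def tau (n : ℕ) (A : Set (EuclideanSpace ℝ (Fin n))) : TopologicalSpace (HalfSpace n) :=
  generateFrom (niemGen n A)

/-- The inclusion of `L` into `X`. -/
def inclLX (n : ℕ) (x : Bdry n) : HalfSpace n := ⟨x.1, le_of_eq x.2.symm⟩

/-- The subspace topology `τ(A)|_L` on `L` induced from `(X, τ(A))`. -/
def tauL (n : ℕ) (A : Set (EuclideanSpace ℝ (Fin n))) : TopologicalSpace (Bdry n) :=
  TopologicalSpace.induced (inclLX n) (tau n A)

/-- A space is perfect if every closed set is a `Gδ`-set. -/
def IsPerfectSpace (X : Type*) [TopologicalSpace X] : Prop :=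
  ∀ s : Set X, IsClosed s → IsGδ s

/-- An `Fσ`-set: a countable union of closed sets. -/
def IsFsigma {X : Type*} [TopologicalSpace X] (s : Set X) : Prop :=
  ∃ F : ℕ → Set X, (∀ i, IsClosed (F i)) ∧ s = ⋃ i, F i

/-- Countably paracompact: every countable open cover admits a locally finite open refinement. -/
def CountablyParacompact (X : Type*) [TopologicalSpace X] : Prop :=
  ∀ u : ℕ → Set X, (∀ i, IsOpen (u i)) → (⋃ i, u i) = Set.univ →
    ∃ (ι : Type) (v : ι → Set X), (∀ j, IsOpen (v j)) ∧ (⋃ j, v j) = Set.univ ∧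
      LocallyFinite v ∧ ∀ j, ∃ i, v j ⊆ u i

/-- A zero set: the zero locus of a continuous real-valued function. -/
def IsZeroSet {X : Type*} [TopologicalSpace X] (s : Set X) : Prop :=
  ∃ f : X → ℝ, Continuous f ∧ s = f ⁻¹' {0}

/-- `Y` is z-embedded in `X` if every zero set of the subspace `Y`
is the trace on `Y` of a zero set of `X`. -/
def ZEmbedded {X : Type*} [TopologicalSpace X] (Y : Set X) : Prop :=
  ∀ s : Set Y, IsZeroSet s → ∃ Z : Set X, IsZeroSet Z ∧ s = Subtype.val ⁻¹' Z

/-- `Y` is `C*`-embedded in `X` if every bounded continuous real-valued function on the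
subspace `Y` extends to a bounded continuous function on `X`. -/
def CStarEmbedded {X : Type*} [TopologicalSpace X] (Y : Set X) : Prop :=
  ∀ f : Y → ℝ, Continuous f → (∃ M, ∀ y, |f y| ≤ M) →
    ∃ g : X → ℝ, Continuous g ∧ (∃ M, ∀ x, |g x| ≤ M) ∧ ∀ y : Y, g ↑y = f y
end

namespace NiemAux

open Topology

variable {n : ℕ} {A : Set (EuclideanSpace ℝ (Fin n))}

/-- Type synonym for `X` carrying the topology `τ(A)`. -/
def XS (n : ℕ) (A : Set (EuclideanSpace ℝ (Fin n))) : Type := HalfSpace n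

instance : TopologicalSpace (XS n A) := tau n A

/-- The underlying point in Euclidean space. -/
def toE : XS n A → EuclideanSpace ℝ (Fin n) := Subtype.val

lemma memX (x : XS n A) : 0 ≤ lastCoord n (toE x) := x.2

lemma toE_injective : Function.Injective (toE : XS n A → EuclideanSpace ℝ (Fin n)) :=
  Subtype.val_injective

/-- Type synonym for `L` carrying the topology `τ(A)|_L`. -/
def LS (n : ℕ) (A : Set (EuclideanSpace ℝ (Fin n))) : Type := Bdry n

instance : TopologicalSpace (LS n A) := tauL n A

def PX (n : ℕ) (A : Set (EuclideanSpace ℝ (Fin n))) : Set (XS n A) := toE ⁻¹' OpenHalf n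
def LX (n : ℕ) (A : Set (EuclideanSpace ℝ (Fin n))) : Set (XS n A) := toE ⁻¹' Bdry n

lemma continuous_lastCoord (hn : 0 < n) : Continuous (lastCoord n) := by
  have : lastCoord n = fun x : EuclideanSpace ℝ (Fin n) => x ⟨n - 1, Nat.sub_lt hn one_pos⟩ := by
    funext x; simp [lastCoord, hn]
  rw [this]
  exact (EuclideanSpace.proj (𝕜 := ℝ) (⟨n - 1, Nat.sub_lt hn one_pos⟩ : Fin n)).continuous

lemma norm_eVec (hn : 0 < n) : ‖eVec n‖ = 1 := by
  simp [eVec, hn, EuclideanSpace.norm_single]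

lemma isOpen_gen {s : Set (XS n A)} (hs : s ∈ niemGen n A) : IsOpen s :=
  TopologicalSpace.isOpen_generateFrom_of_mem hs

lemma isOpen_preimage (hn : 0 < n) {V : Set (EuclideanSpace ℝ (Fin n))} (hV : IsOpen V) :
    IsOpen (toE ⁻¹' V : Set (XS n A)) := by
  rw [isOpen_iff_forall_mem_open]
  intro x hx
  obtain ⟨δ, δpos, hδ⟩ := Metric.isOpen_iff.1 hV (toE x) hx
  rcases eq_or_lt_of_le (memX x) with h0 | h0
  · by_cases hxA : toE x ∈ A
    · exact ⟨toE ⁻¹' ball (toE x) δ, fun y hy => hδ hy,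
        isOpen_gen (Or.inl (Or.inr ⟨toE x, hxA, δ, δpos, rfl⟩)),
        mem_ball_self δpos⟩
    · refine ⟨toE ⁻¹' tangentBall n (toE x) (δ/2), ?_, ?_, Or.inl rfl⟩
      · intro y hy
        rcases hy with hy | hy
        · have hxy : toE y = toE x := hy
          exact hδ (by simp [hxy, mem_ball, δpos])
        · apply hδ
          rw [mem_ball] at hy ⊢
          have h1 : dist (toE x + (δ/2) • eVec n) (toE x) = δ/2 := by
            rw [dist_self_add_left, norm_smul, norm_eVec hn, Real.norm_eq_abs,
              abs_of_pos (by linarith), mul_one]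
          calc dist (toE y) (toE x)
              ≤ dist (toE y) (toE x + (δ/2) • eVec n)
                + dist (toE x + (δ/2) • eVec n) (toE x) := dist_triangle _ _ _
            _ < δ/2 + δ/2 := by rw [h1]; linarith
            _ = δ := by ring
      · exact isOpen_gen (Or.inr ⟨toE x, ⟨h0.symm, hxA⟩, δ/2, by linarith, rfl⟩)
  · refine ⟨toE ⁻¹' ball (toE x) (min δ (lastCoord n (toE x)) / 2),
      fun y hy => hδ (ball_subset_ball (by
        have := min_le_left δ (lastCoord n (toE x)); linarith) hy),
      isOpen_gen (Or.inl (Or.inl ⟨toE x, h0, min δ (lastCoord n (toE x)) / 2,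
        by positivity,
        by have := min_le_right δ (lastCoord n (toE x)); linarith, rfl⟩)),
      mem_ball_self (by positivity)⟩

lemma continuous_toE (hn : 0 < n) : Continuous (toE : XS n A → EuclideanSpace ℝ (Fin n)) :=
  continuous_def.2 fun _ hV => isOpen_preimage hn hV

lemma exists_ball_subset {W : Set (XS n A)} (hW : IsOpen W) :
    ∀ x ∈ W, 0 < lastCoord n (toE x) → ∃ r, 0 < r ∧ toE ⁻¹' ball (toE x) r ⊆ W := by
  have hW' : TopologicalSpace.GenerateOpen (niemGen n A) W := hW
  clear hW
  induction hW' with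
  | basic s hs =>
    intro x hx hpos
    rcases hs with (⟨a, _, ε, _, _, rfl⟩ | ⟨a, _, ε, _, rfl⟩) | ⟨a, ha, ε, hε, rfl⟩
    · have hx' : dist (toE x) a < ε := hx
      refine ⟨ε - dist (toE x) a, by linarith, fun y hy => ?_⟩
      have hy' : dist (toE y) (toE x) < ε - dist (toE x) a := hy
      have : dist (toE y) a < ε := by
        have := dist_triangle (toE y) (toE x) a; linarith
      exact this
    · have hx' : dist (toE x) a < ε := hx
      refine ⟨ε - dist (toE x) a, by linarith, fun y hy => ?_⟩
      have hy' : dist (toE y) (toE x) < ε - dist (toE x) a := hy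
      have : dist (toE y) a < ε := by
        have := dist_triangle (toE y) (toE x) a; linarith
      exact this
    · have hx' : toE x ∈ tangentBall n a ε := hx
      rcases hx' with hx' | hx'
      · exfalso
        have : toE x = a := hx'
        rw [this] at hpos
        rw [ha.1] at hpos
        exact lt_irrefl _ hpos
      · have hd : dist (toE x) (a + ε • eVec n) < ε := hx'
        refine ⟨ε - dist (toE x) (a + ε • eVec n), by linarith, fun y hy => ?_⟩
        have hy' : dist (toE y) (toE x) < ε - dist (toE x) (a + ε • eVec n) := hy
        have : dist (toE y) (a + ε • eVec n) < ε := by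
          have := dist_triangle (toE y) (toE x) (a + ε • eVec n); linarith
        exact Or.inr this
  | univ => exact fun _ _ _ => ⟨1, one_pos, fun _ _ => trivial⟩
  | inter s t _ _ ihs iht =>
    intro x hx hpos
    obtain ⟨r1, hr1, h1⟩ := ihs x hx.1 hpos
    obtain ⟨r2, hr2, h2⟩ := iht x hx.2 hpos
    exact ⟨min r1 r2, lt_min hr1 hr2, fun y hy =>
      ⟨h1 (ball_subset_ball (min_le_left _ _) hy), h2 (ball_subset_ball (min_le_right _ _) hy)⟩⟩
  | sUnion S _ ih =>
    intro x hx hpos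
    obtain ⟨s, hsS, hxs⟩ := hx
    obtain ⟨r, hr, hsub⟩ := ih s hsS x hxs hpos
    exact ⟨r, hr, fun y hy => ⟨s, hsS, hsub hy⟩⟩

lemma isOpen_PX (hn : 0 < n) : IsOpen (PX n A) :=
  isOpen_preimage hn (isOpen_lt continuous_const (continuous_lastCoord hn))

lemma LX_eq_compl : LX n A = (PX n A)ᶜ := by
  ext x
  simp only [LX, PX, mem_preimage, mem_compl_iff, Bdry, OpenHalf, mem_setOf_eq, not_lt]
  exact ⟨fun h => le_of_eq h, fun h => le_antisymm h (memX x)⟩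

lemma isClosed_LX (hn : 0 < n) : IsClosed (LX n A) := by
  rw [LX_eq_compl]; exact (isOpen_PX hn).isClosed_compl

lemma LX_union_PX : LX n A ∪ PX n A = univ := by
  rw [LX_eq_compl]; exact compl_union_self _

lemma isGδ_LX (hn : 0 < n) : IsGδ (LX n A) := by
  have heq : LX n A = ⋂ k : ℕ, toE ⁻¹' {y | lastCoord n y < ((k : ℝ) + 1)⁻¹} := by
    ext x
    simp only [LX, mem_preimage, Bdry, mem_setOf_eq, mem_iInter]
    constructor
    · intro h k; rw [h]; positivity
    · intro h
      refine le_antisymm ?_ (memX x)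
      by_contra hc
      push_neg at hc
      obtain ⟨k, hk⟩ := exists_nat_gt (lastCoord n (toE x))⁻¹
      have h2 : ((k : ℝ) + 1)⁻¹ < lastCoord n (toE x) := by
        rw [inv_lt_comm₀ (by positivity) hc]
        linarith
      exact absurd (h k) (not_lt.2 h2.le)
  rw [heq]
  exact IsGδ.iInter_of_isOpen fun k =>
    isOpen_preimage hn (isOpen_lt (continuous_lastCoord hn) continuous_const)

def Kc (n : ℕ) (k : ℕ) : Set (EuclideanSpace ℝ (Fin n)) :=
  closedBall 0 k ∩ {x | ((k : ℝ) + 1)⁻¹ ≤ lastCoord n x}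

lemma isCompact_Kc (hn : 0 < n) (k : ℕ) : IsCompact (Kc n k) :=
  (isCompact_closedBall 0 k).inter_right
    (isClosed_le continuous_const (continuous_lastCoord hn))

lemma Kc_subset_OpenHalf (k : ℕ) : Kc n k ⊆ OpenHalf n := fun x hx => by
  have h2 : ((k : ℝ) + 1)⁻¹ ≤ lastCoord n x := hx.2
  have h3 : (0 : ℝ) < ((k : ℝ) + 1)⁻¹ := by positivity
  exact lt_of_lt_of_le h3 h2

lemma iUnion_Kc : (⋃ k, Kc n k) = OpenHalf n := by
  apply subset_antisymm
  · exact iUnion_subset fun k => Kc_subset_OpenHalf k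
  · intro x hx
    have hx' : 0 < lastCoord n x := hx
    obtain ⟨k, hk⟩ := exists_nat_ge (max ‖x‖ (lastCoord n x)⁻¹)
    refine mem_iUnion.2 ⟨k, ⟨?_, ?_⟩⟩
    · rw [mem_closedBall, dist_zero_right]
      exact le_trans (le_max_left _ _) hk
    · have h1 : (lastCoord n x)⁻¹ ≤ (k : ℝ) + 1 :=
        le_trans (le_trans (le_max_right _ _) hk) (by linarith)
      show ((k : ℝ) + 1)⁻¹ ≤ lastCoord n x
      rw [inv_le_comm₀ (by positivity) hx']
      exact h1
  
lemma isCompact_KX (hn : 0 < n) (k : ℕ) :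
    IsCompact (toE ⁻¹' Kc n k : Set (XS n A)) := by
  classical
  apply isCompact_of_finite_subcover
  intro ι U hUo hcov
  have key : ∀ x : XS n A, toE x ∈ Kc n k →
      ∃ i r, 0 < r ∧ toE ⁻¹' ball (toE x) r ⊆ U i := by
    intro x hx
    have hxP : 0 < lastCoord n (toE x) := Kc_subset_OpenHalf k hx
    obtain ⟨i, hi⟩ := mem_iUnion.1 (hcov hx)
    obtain ⟨r, hr, hsub⟩ := exists_ball_subset (hUo i) x hi hxP
    exact ⟨i, r, hr, hsub⟩
  choose idx rad hrad hsub using key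
  have hcovE : Kc n k ⊆ ⋃ z : (toE ⁻¹' Kc n k : Set (XS n A)), ball (toE z.1) (rad z.1 z.2) := by
    intro p hp
    have hpX : 0 ≤ lastCoord n p := le_of_lt (Kc_subset_OpenHalf k hp)
    exact mem_iUnion.2 ⟨⟨⟨p, hpX⟩, hp⟩, mem_ball_self (hrad _ _)⟩
  obtain ⟨t, ht⟩ := (isCompact_Kc hn k).elim_finite_subcover _ (fun _ => isOpen_ball) hcovE
  refine ⟨t.image (fun z => idx z.1 z.2), ?_⟩
  intro x hx
  obtain ⟨z, hzt, hzball⟩ := mem_iUnion₂.1 (ht hx)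
  exact mem_iUnion₂.2 ⟨idx z.1 z.2, Finset.mem_image_of_mem _ hzt, hsub z.1 z.2 hzball⟩

lemma PX_eq_iUnion : PX n A = ⋃ k, (toE ⁻¹' Kc n k : Set (XS n A)) := by
  rw [← preimage_iUnion, PX, iUnion_Kc]

lemma isLindelof_PX (hn : 0 < n) : IsLindelof (PX n A) := by
  rw [PX_eq_iUnion]
  exact isLindelof_iUnion fun k => (isCompact_KX hn k).isLindelof

lemma isSigmaCompact_PX (hn : 0 < n) : IsSigmaCompact (PX n A) :=
  ⟨fun k => toE ⁻¹' Kc n k, fun k => isCompact_KX hn k, PX_eq_iUnion.symm⟩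

lemma isGδ_preimage {X Y : Type*} [TopologicalSpace X] [TopologicalSpace Y] {f : X → Y}
    (hf : Continuous f) {s : Set Y} (hs : IsGδ s) : IsGδ (f ⁻¹' s) := by
  obtain ⟨T, hTo, hTc, rfl⟩ := hs
  rw [preimage_sInter]
  exact IsGδ.biInter hTc fun t ht => ((hTo t ht).preimage hf).isGδ

lemma isGδ_inter_PX (hn : 0 < n) {s : Set (XS n A)} (hs : IsClosed s) :
    IsGδ (s ∩ PX n A) := by
  have key : s ∩ PX n A = ⋂ k : ℕ,
      (PX n A ∩ toE ⁻¹' (⋃ y ∈ toE '' (s ∩ PX n A), ball y ((k : ℝ) + 1)⁻¹)) := by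
    apply subset_antisymm
    · intro x hx
      refine mem_iInter.2 fun k => ⟨hx.2, ?_⟩
      simp only [mem_preimage]
      exact mem_biUnion (mem_image_of_mem _ hx) (mem_ball_self (by positivity))
    · intro x hx
      have hxP : x ∈ PX n A := (mem_iInter.1 hx 0).1
      refine ⟨?_, hxP⟩
      by_contra hxs
      obtain ⟨r, hr, hsub⟩ := exists_ball_subset hs.isOpen_compl x hxs hxP
      obtain ⟨k, hk⟩ := exists_nat_one_div_lt hr
      have hk' : ((k : ℝ) + 1)⁻¹ < r := by rw [← one_div]; exact hk
      have hmem := (mem_iInter.1 hx k).2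
      simp only [mem_preimage, mem_iUnion, exists_prop] at hmem
      obtain ⟨y', ⟨y, hy, rfl⟩, hball⟩ := hmem
      have hyb : y ∈ toE ⁻¹' ball (toE x) r := by
        simp only [mem_preimage, mem_ball]
        rw [dist_comm]
        exact lt_trans hball hk'
      exact (hsub hyb) hy.1
  rw [key]
  exact IsGδ.iInter_of_isOpen fun k =>
    (isOpen_PX hn).inter (isOpen_preimage hn (isOpen_biUnion fun y _ => isOpen_ball))

lemma isGδ_val_image (hn : 0 < n) {t : Set (LX n A : Set (XS n A))} (ht : IsGδ t) :
    IsGδ (Subtype.val '' t : Set (XS n A)) := by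
  obtain ⟨T, hTo, hTc, rfl⟩ := ht
  have hch : ∀ u ∈ T, ∃ W : Set (XS n A), IsOpen W ∧ Subtype.val ⁻¹' W = u := fun u hu =>
    isOpen_induced_iff.1 (hTo u hu)
  choose W hWo hWu using hch
  have himg : Subtype.val '' ⋂₀ T = (⋂ u, ⋂ hu : u ∈ T, W u hu) ∩ LX n A := by
    ext x
    constructor
    · rintro ⟨y, hy, rfl⟩
      refine ⟨mem_iInter₂.2 fun u hu => ?_, y.2⟩
      have h1 : y ∈ u := hy u hu
      rw [← hWu u hu] at h1; exact h1
    · rintro ⟨hx1, hx2⟩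
      refine ⟨⟨x, hx2⟩, fun u hu => ?_, rfl⟩
      rw [← hWu u hu]
      exact mem_iInter₂.1 hx1 u hu
  rw [himg]
  exact (IsGδ.biInter hTc fun u hu => (hWo u hu).isGδ).inter (isGδ_LX hn)

def bdryHomeo (n : ℕ) (A : Set (EuclideanSpace ℝ (Fin n))) :
    LS n A ≃ₜ (LX n A : Set (XS n A)) where
  toFun x := ⟨inclLX n x, x.2⟩
  invFun y := ⟨toE y.1, y.2⟩
  left_inv _ := rfl
  right_inv _ := rfl
  continuous_toFun := Continuous.subtype_mk continuous_induced_dom fun x => x.2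
  continuous_invFun := by
    apply continuous_induced_rng.2
    have h : (inclLX n ∘ fun y : (LX n A : Set (XS n A)) => (⟨toE y.1, y.2⟩ : LS n A)) =
        (Subtype.val : {x : XS n A // x ∈ LX n A} → XS n A) := funext fun y => Subtype.ext rfl
    change Continuous[_, tau n A] (Subtype.val : {x : XS n A // x ∈ LX n A} → XS n A)
    exact continuous_induced_dom

lemma homeo_lindelof {X Y : Type*} [TopologicalSpace X] [TopologicalSpace Y] (h : X ≃ₜ Y)
    (hX : LindelofSpace X) : LindelofSpace Y := by
  rw [← isLindelof_univ_iff]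
  have h2 := (isLindelof_univ_iff.2 hX).image h.continuous
  rwa [image_univ, h.range_coe] at h2

lemma homeo_sigmaCompact {X Y : Type*} [TopologicalSpace X] [TopologicalSpace Y] (h : X ≃ₜ Y)
    (hX : SigmaCompactSpace X) : SigmaCompactSpace Y := by
  rw [← isSigmaCompact_univ_iff]
  have h2 := (isSigmaCompact_univ_iff.2 hX).image h.continuous
  rwa [image_univ, h.range_coe] at h2

lemma homeo_perfect {X Y : Type*} [TopologicalSpace X] [TopologicalSpace Y] (h : X ≃ₜ Y)
    (hY : IsPerfectSpace Y) : IsPerfectSpace X := by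
  intro s hs
  have h2 := hY _ (hs.preimage h.symm.continuous)
  have h3 := isGδ_preimage h.continuous h2
  have h4 : (h : X → Y) ⁻¹' (h.symm ⁻¹' s) = s := by
    ext x; simp
  rwa [h4] at h3

lemma perfect_LX_of_perfect (hn : 0 < n) (h : IsPerfectSpace (XS n A)) :
    IsPerfectSpace (LX n A : Set (XS n A)) := by
  intro s hs
  have hcl : IsClosed (Subtype.val '' s : Set (XS n A)) :=
    ((isClosed_LX hn).isClosedEmbedding_subtypeVal).isClosedMap _ hs
  have h2 := isGδ_preimage (f := (Subtype.val : {x : XS n A // x ∈ LX n A} → XS n A))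
    continuous_subtype_val (h _ hcl)
  rwa [preimage_image_eq s Subtype.val_injective] at h2

lemma perfect_of_perfect_LX (hn : 0 < n) (h : IsPerfectSpace (LX n A : Set (XS n A))) :
    IsPerfectSpace (XS n A) := by
  intro s hs
  have h1 : IsGδ (s ∩ LX n A) := by
    have hcl : IsClosed (Subtype.val ⁻¹' s : Set (LX n A : Set (XS n A))) :=
      hs.preimage continuous_subtype_val
    have h2 := isGδ_val_image hn (h _ hcl)
    rwa [Subtype.image_preimage_coe, inter_comm] at h2
  have h2 := isGδ_inter_PX hn hs
  have hsplit : s = s ∩ LX n A ∪ s ∩ PX n A := by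
    rw [← inter_union_distrib_left, LX_union_PX, inter_univ]
  rw [hsplit]; exact h1.union h2

lemma lindelof_iff (hn : 0 < n) :
    LindelofSpace (XS n A) ↔ LindelofSpace (LX n A : Set (XS n A)) := by
  constructor
  · intro h
    haveI := h
    exact isLindelof_iff_LindelofSpace.1 ((isClosed_LX hn).isLindelof)
  · intro h
    rw [← isLindelof_univ_iff, ← LX_union_PX (n := n) (A := A)]
    exact (isLindelof_iff_LindelofSpace.2 h).union (isLindelof_PX hn)

lemma sigmaCompact_iff (hn : 0 < n) :
    SigmaCompactSpace (XS n A) ↔ SigmaCompactSpace (LX n A : Set (XS n A)) := by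
  constructor
  · intro h
    haveI := h
    exact isSigmaCompact_iff_sigmaCompactSpace.1
      (isSigmaCompact_univ.of_isClosed_subset (isClosed_LX hn) (subset_univ _))
  · intro h
    rw [← isSigmaCompact_univ_iff, ← LX_union_PX (n := n) (A := A)]
    obtain ⟨F, hFc, hFU⟩ := isSigmaCompact_iff_sigmaCompactSpace.2 h
    obtain ⟨G, hGc, hGU⟩ := isSigmaCompact_PX (n := n) (A := A) hn
    exact ⟨fun k => F k ∪ G k, fun k => (hFc k).union (hGc k),
      by rw [iUnion_union_distrib, hFU, hGU]⟩

end NiemAux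


/-- For every `n ≥ 2` and `A ⊆ L`: `(X, τ(A))` is perfect (resp. Lindelöf, σ-compact)
iff the subspace `(L, τ(A)|_L)` is perfect (resp. Lindelöf, σ-compact). -/
theorem tauA_iff_boundary (n : ℕ) (hn : 2 ≤ n)
    (A : Set (EuclideanSpace ℝ (Fin n))) (hA : A ⊆ Bdry n) :
    (@IsPerfectSpace (HalfSpace n) (tau n A) ↔ @IsPerfectSpace (Bdry n) (tauL n A)) ∧
    (@LindelofSpace (HalfSpace n) (tau n A) ↔ @LindelofSpace (Bdry n) (tauL n A)) ∧
    (@SigmaCompactSpace (HalfSpace n) (tau n A) ↔ @SigmaCompactSpace (Bdry n) (tauL n A)) := by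
  have hn0 : 0 < n := by omega
  refine ⟨⟨fun h => ?_, fun h => ?_⟩, ⟨fun h => ?_, fun h => ?_⟩, ⟨fun h => ?_, fun h => ?_⟩⟩
  · exact NiemAux.homeo_perfect (X := NiemAux.LS n A) (NiemAux.bdryHomeo n A)
      (NiemAux.perfect_LX_of_perfect hn0 h)
  · exact NiemAux.perfect_of_perfect_LX hn0
      (NiemAux.homeo_perfect (NiemAux.bdryHomeo n A).symm h)
  · exact NiemAux.homeo_lindelof (Y := NiemAux.LS n A) (NiemAux.bdryHomeo n A).symm
      ((NiemAux.lindelof_iff hn0).1 h)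
  · exact (NiemAux.lindelof_iff hn0).2 (NiemAux.homeo_lindelof (NiemAux.bdryHomeo n A) h)
  · exact NiemAux.homeo_sigmaCompact (Y := NiemAux.LS n A) (NiemAux.bdryHomeo n A).symm
      ((NiemAux.sigmaCompact_iff hn0).1 h)
  · exact (NiemAux.sigmaCompact_iff hn0).2
      (NiemAux.homeo_sigmaCompact (NiemAux.bdryHomeo n A) h)
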